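/- Let k ≥ 1 be an integer, η ∈ ℝ, c ∈ ℝ, and z ∈ ℂ with |z| < 1. For ε > 0 set p = 1 + ε, q = 1 + ηε and p* = p q^{−2c} (real power), and define E_k(z; p*, q) = exp( Σ_{ℓ=1}^∞ [(1 − (p*)^{−kℓ})(1 − ((p*)^k q²)^ℓ)/(1 + q^{2ℓ})] · z^ℓ/ℓ ). Then there is ε₀ > 0 such that the series converges absolutely for all 0 < ε < ε₀, and lim_{ε→0⁺} (E_k(z; p*, q) − 1)/ε² = −(k(1−2ηc)(k(1−2ηc)+2η)/2) · z/(1−z)². -/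

import Mathlib

open Filter Topology

/-- The `ℓ`-th term of the series defining `g^{(k)}`:
`(1 − p^{−kℓ})(1 − (pᵏq²)^ℓ)/(1 + q^{2ℓ}) · z^ℓ/ℓ`. -/
noncomputable def Eterm (k : ℕ) (p q : ℝ) (z : ℂ) (l : ℕ) : ℂ :=
  (1 - (p : ℂ) ^ (-((k : ℤ) * l))) * (1 - ((p : ℂ) ^ k * (q : ℂ) ^ 2) ^ l)
    / (1 + (q : ℂ) ^ (2 * l)) * z ^ l / (l : ℂ)

/-- The structure-function factor
`E_k(z;p,q) = exp( Σ_{ℓ≥1} (1 − p^{−kℓ})(1 − (pᵏq²)^ℓ)/(1 + q^{2ℓ}) · z^ℓ/ℓ )`. -/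
noncomputable def Efun (k : ℕ) (p q : ℝ) (z : ℂ) : ℂ :=
  Complex.exp (∑' l : ℕ, Eterm k p q z (l + 1))

lemma aux_abs_log_le {y : ℝ} (hy : 1/2 ≤ y) : |Real.log y| ≤ 2 * |y - 1| := by
  have hy0 : (0:ℝ) < y := by linarith
  rcases le_or_gt 1 y with h | h
  · rw [abs_of_nonneg (Real.log_nonneg h), abs_of_nonneg (by linarith : (0:ℝ) ≤ y - 1)]
    have := Real.log_le_sub_one_of_pos hy0
    linarith
  · rw [abs_of_nonpos (Real.log_nonpos hy0.le h.le), abs_of_nonpos (by linarith : y - 1 ≤ 0)]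
    have h2 : Real.log y⁻¹ ≤ y⁻¹ - 1 := Real.log_le_sub_one_of_pos (by positivity)
    rw [Real.log_inv] at h2
    have h3 : y * y⁻¹ = 1 := mul_inv_cancel₀ hy0.ne'
    nlinarith

lemma aux_abs_exp_sub_one (t : ℝ) : |Real.exp t - 1| ≤ |t| * Real.exp |t| := by
  rcases le_or_gt 0 t with h | h
  · have h0 := Real.add_one_le_exp t
    rw [abs_of_nonneg h, abs_of_nonneg (by linarith : (0:ℝ) ≤ Real.exp t - 1)]
    have h1 := Real.add_one_le_exp (-t)
    rw [Real.exp_neg] at h1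
    have h2 : (0:ℝ) < Real.exp t := Real.exp_pos t
    have h3 : (-t + 1) * Real.exp t ≤ (Real.exp t)⁻¹ * Real.exp t :=
      mul_le_mul_of_nonneg_right h1 h2.le
    rw [inv_mul_cancel₀ h2.ne'] at h3
    nlinarith
  · have h0 := Real.add_one_le_exp t
    have h1 : Real.exp t < 1 := by
      rw [← Real.exp_zero]; exact Real.exp_lt_exp.mpr h
    rw [abs_of_neg h, abs_of_nonpos (by linarith : Real.exp t - 1 ≤ 0)]
    have h2 : (1:ℝ) ≤ Real.exp (-t) := by
      rw [← Real.exp_zero]; exact Real.exp_le_exp.mpr (by linarith)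
    nlinarith

lemma aux_abs_one_sub_zpow {x T : ℝ} (hx : 0 < x) (m : ℤ) (h : |Real.log x| ≤ T) :
    |1 - x ^ m| ≤ (|(m:ℝ)| * T) * Real.exp (|(m:ℝ)| * T) := by
  have hT : 0 ≤ T := le_trans (abs_nonneg _) h
  have hxm : x ^ m = Real.exp (Real.log x * m) := by
    rw [← Real.rpow_intCast x m, Real.rpow_def_of_pos hx]
  rw [abs_sub_comm, hxm]
  refine (aux_abs_exp_sub_one _).trans ?_
  have h1 : |Real.log x * (m:ℝ)| ≤ |(m:ℝ)| * T := by
    rw [abs_mul, mul_comm]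
    exact mul_le_mul_of_nonneg_left h (abs_nonneg _)
  exact mul_le_mul h1 (Real.exp_le_exp.mpr h1) (Real.exp_pos _).le (by positivity)

lemma aux_abs_one_sub_pow {x T : ℝ} (hx : 0 < x) (n : ℕ) (h : |Real.log x| ≤ T) :
    |1 - x ^ n| ≤ ((n:ℝ) * T) * Real.exp ((n:ℝ) * T) := by
  have := aux_abs_one_sub_zpow hx (n : ℤ) h
  simpa [abs_of_nonneg (Nat.cast_nonneg n : (0:ℝ) ≤ (n:ℝ))] using this

lemma aux_slope' {f : ℝ → ℝ} {d : ℝ} (hf : HasDerivAt f d 0) (h0 : f 0 = 1) :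
    Tendsto (fun ε => (1 - f ε) / ε) (nhdsWithin 0 (Set.Ioi 0)) (nhds (-d)) := by
  have h := hasDerivAt_iff_tendsto_slope.mp hf
  have h2 : Tendsto (slope f 0) (nhdsWithin 0 (Set.Ioi 0)) (nhds d) :=
    h.mono_left (nhdsWithin_mono _ (fun x hx => ne_of_gt hx))
  refine h2.neg.congr' ?_
  filter_upwards [self_mem_nhdsWithin] with x hx
  rw [slope_def_field, h0]
  rw [sub_zero, ← neg_div, neg_sub]

lemma aux_hasDerivAt_P (η c : ℝ) :
    HasDerivAt (fun ε : ℝ => (1 + ε) * (1 + η * ε) ^ (-(2 * c))) (1 - 2*η*c) 0 := by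
  have h1 : HasDerivAt (fun ε : ℝ => 1 + η * ε) η 0 := by
    simpa using ((hasDerivAt_id (0:ℝ)).const_mul η).const_add 1
  have h2 : HasDerivAt (fun ε : ℝ => (1 + η * ε) ^ (-(2*c))) (-(2*c) * η) 0 := by
    have h3 := Real.hasDerivAt_rpow_const (x := (1:ℝ)) (p := -(2*c)) (Or.inl one_ne_zero)
    have e0 : (1:ℝ) = 1 + η * 0 := by ring
    rw [e0] at h3
    have h4 := h3.comp 0 h1
    simpa [Function.comp_def] using h4
  have h3 : HasDerivAt (fun ε : ℝ => 1 + ε) 1 0 := by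
    simpa using (hasDerivAt_id (0:ℝ)).const_add 1
  have := h3.mul h2
  norm_num at this ⊢
  exact this.congr_deriv (by ring)

lemma aux_limA (η c : ℝ) (m : ℤ) :
    Tendsto (fun ε : ℝ => (1 - ((1+ε)*(1+η*ε) ^ (-(2*c))) ^ m) / ε) (nhdsWithin 0 (Set.Ioi 0))
      (nhds (-((m:ℝ) * (1 - 2*η*c)))) := by
  have hP := aux_hasDerivAt_P η c
  have h1 : HasDerivAt (fun ε : ℝ => ((1+ε)*(1+η*ε) ^ (-(2*c))) ^ m)
      ((m:ℝ) * (1 - 2*η*c)) 0 := by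
    have h2 := hasDerivAt_zpow m (1:ℝ) (Or.inl one_ne_zero)
    have e0 : (1:ℝ) = (1+(0:ℝ))*(1+η*0) ^ (-(2*c)) := by simp
    rw [e0] at h2
    have h4 := h2.comp 0 hP
    simpa [Function.comp_def] using h4
  exact aux_slope' h1 (by simp)

lemma aux_limB (η c : ℝ) (kk s : ℕ) :
    Tendsto (fun ε : ℝ => (1 - (((1+ε)*(1+η*ε) ^ (-(2*c))) ^ kk * (1+η*ε)^2) ^ s) / ε)
      (nhdsWithin 0 (Set.Ioi 0))
      (nhds (-((s:ℝ) * ((kk:ℝ)*(1 - 2*η*c) + 2*η)))) := by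
  have hP := aux_hasDerivAt_P η c
  have h1 : HasDerivAt (fun ε : ℝ => 1 + η * ε) η 0 := by
    simpa using ((hasDerivAt_id (0:ℝ)).const_mul η).const_add 1
  have hPk : HasDerivAt (fun ε : ℝ => ((1+ε)*(1+η*ε) ^ (-(2*c))) ^ kk)
      ((kk:ℝ) * (1 - 2*η*c)) 0 := by
    have h2 := hasDerivAt_pow kk ((1+(0:ℝ))*(1+η*0) ^ (-(2*c)))
    have h4 := h2.comp 0 hP
    simpa [Function.comp_def] using h4
  have hq2 : HasDerivAt (fun ε : ℝ => (1 + η * ε)^2) (2*η) 0 := by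
    have h2 := hasDerivAt_pow 2 (1+η*(0:ℝ))
    have h4 := h2.comp 0 h1
    simpa [Function.comp_def] using h4
  have hbase := hPk.mul hq2
  have hb : HasDerivAt (fun ε : ℝ => ((1+ε)*(1+η*ε) ^ (-(2*c))) ^ kk * (1+η*ε)^2)
      ((kk:ℝ)*(1 - 2*η*c) + 2*η) 0 := by
    exact hbase.congr_deriv (by norm_num)
  have h2 := hasDerivAt_pow s (((1+(0:ℝ))*(1+η*0) ^ (-(2*c))) ^ kk * (1+η*0)^2)
  have h4 := h2.comp 0 hb
  have h5 : HasDerivAt (fun ε : ℝ => (((1+ε)*(1+η*ε) ^ (-(2*c))) ^ kk * (1+η*ε)^2) ^ s)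
      ((s:ℝ) * ((kk:ℝ)*(1 - 2*η*c) + 2*η)) 0 := by
    simpa [Function.comp_def] using h4
  exact aux_slope' h5 (by simp)

lemma aux_perterm (k : ℕ) (η c : ℝ) (z : ℂ) (ε₀ : ℝ) (hε₀ : 0 < ε₀)
    (hq : ∀ ε : ℝ, 0 < ε → ε < ε₀ → 0 < 1 + η*ε) (l : ℕ) :
    Tendsto (fun ε : ℝ => Eterm k ((1+ε)*(1+η*ε) ^ (-(2*c))) (1+η*ε) z (l+1) / (ε:ℂ)^2)
      (nhdsWithin 0 (Set.Ioi 0))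
      (nhds (-(((k:ℂ) * (1 - 2*(η:ℂ)*(c:ℂ)) * ((k:ℂ)*(1 - 2*(η:ℂ)*(c:ℂ)) + 2*(η:ℂ)))/2)
        * (((l:ℂ)+1) * z^(l+1)))) := by
  have hA := aux_limA η c (-((k:ℤ)*(l+1)))
  have hB := aux_limB η c k (l+1)
  have hA' := (Complex.continuous_ofReal.tendsto _).comp hA
  have hB' := (Complex.continuous_ofReal.tendsto _).comp hB
  have hD : Tendsto (fun ε : ℝ => ((1 + (1+η*ε)^(2*(l+1)) : ℝ) : ℂ))
      (nhdsWithin 0 (Set.Ioi 0)) (nhds (((2:ℝ) : ℂ))) := by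
    have hcont : Continuous (fun ε : ℝ => ((1 + (1+η*ε)^(2*(l+1)) : ℝ) : ℂ)) := by continuity
    have h2 : Tendsto (fun ε : ℝ => ((1 + (1+η*ε)^(2*(l+1)) : ℝ) : ℂ))
        (nhdsWithin 0 (Set.Ioi 0)) (nhds ((1 + (1+η*0)^(2*(l+1)) : ℝ) : ℂ)) :=
      (hcont.tendsto 0).mono_left nhdsWithin_le_nhds
    convert h2 using 2
    norm_num
  have hcomb := (((hA'.mul hB').div hD (by norm_num)).mul_const (z^(l+1))).div_const
    ((((l:ℕ)+1 : ℕ)) : ℂ)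
  have hs0 : (((l:ℕ)+1 : ℕ) : ℂ) ≠ 0 := Nat.cast_ne_zero.mpr (Nat.succ_ne_zero l)
  have hval : (-(((k:ℂ) * (1 - 2*(η:ℂ)*(c:ℂ)) * ((k:ℂ)*(1 - 2*(η:ℂ)*(c:ℂ)) + 2*(η:ℂ)))/2)
        * (((l:ℂ)+1) * z^(l+1)))
      = ((((-(((-((k:ℤ)*(l+1)) : ℤ):ℝ) * (1 - 2*η*c)) : ℝ)) : ℂ)
          * (((-(((l+1:ℕ):ℝ) * ((k:ℝ)*(1 - 2*η*c) + 2*η)) : ℝ)) : ℂ) / (((2:ℝ)):ℂ))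
          * z^(l+1) / ((((l:ℕ)+1 : ℕ)) : ℂ) := by
    have h2l : ((2:ℂ) + (l:ℂ)*2) ≠ 0 := by
      have he : ((2:ℂ) + (l:ℂ)*2) = ((2*(l+1) : ℕ) : ℂ) := by push_cast; ring
      rw [he]; exact Nat.cast_ne_zero.mpr (by omega)
    have h1l : ((l:ℂ) + 1) ≠ 0 := by
      have he : ((l:ℂ) + 1) = (((l+1) : ℕ) : ℂ) := by push_cast; ring
      rw [he]; exact Nat.cast_ne_zero.mpr (by omega)
    push_cast
    field_simp [h2l, h1l]
  rw [hval]
  refine Filter.Tendsto.congr' ?_ hcomb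
  filter_upwards [Ioo_mem_nhdsGT_of_mem (Set.left_mem_Ico.mpr hε₀)] with ε hε
  obtain ⟨h0, h1⟩ := hε
  have hqp := hq ε h0 h1
  have hε0 : (ε:ℂ) ≠ 0 := Complex.ofReal_ne_zero.mpr h0.ne'
  have hD0 : ((1 + (1+η*ε)^(2*(l+1)) : ℝ) : ℂ) ≠ 0 := by
    exact_mod_cast (by positivity : (1 + (1+η*ε)^(2*(l+1)) : ℝ) ≠ 0)
  simp only [Pi.div_apply, Pi.mul_apply, Function.comp_apply]
  rw [Eterm]
  push_cast
  field_simp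

lemma aux_exp_quad {w : ℂ} (h : ‖w‖ ≤ 1) : ‖Complex.exp w - 1 - w‖ ≤ ‖w‖^2 := by
  have h2 := Complex.exp_bound (x := w) h (n := 2) (by norm_num)
  have h3 : (∑ m ∈ Finset.range 2, w ^ m / (m.factorial : ℂ)) = 1 + w := by
    simp [Finset.sum_range_succ]
  rw [h3] at h2
  norm_num at h2
  have h4 : ‖Complex.exp w - (1+w)‖ = ‖Complex.exp w - 1 - w‖ := by
    congr 1; ring
  rw [h4] at h2
  have h5 : (0:ℝ) ≤ ‖w‖ ^ 2 := by positivity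
  linarith

set_option maxHeartbeats 1000000 in
/-- Scaling limit of `g^{*(k)}`: with `p = 1 + ε`, `q = 1 + ηε`, `p* = p q^{−2c}`,
the series converges absolutely for small `ε > 0` and
`lim_{ε→0⁺} (E_k(z;p*,q) − 1)/ε² = −(k(1−2ηc)(k(1−2ηc)+2η)/2) · z/(1−z)²`. -/
theorem scaling_limit_gk_star (k : ℕ) (hk : 1 ≤ k) (η c : ℝ) (z : ℂ)
    (hz : ‖z‖ < 1) :
    ∃ ε₀ : ℝ, 0 < ε₀ ∧
      (∀ ε : ℝ, 0 < ε → ε < ε₀ →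
        Summable (fun l : ℕ =>
          ‖Eterm k ((1 + ε) * (1 + η * ε) ^ (-(2 * c))) (1 + η * ε) z (l + 1)‖)) ∧
      Filter.Tendsto
        (fun ε : ℝ =>
          (Efun k ((1 + ε) * (1 + η * ε) ^ (-(2 * c))) (1 + η * ε) z - 1) / (ε : ℂ) ^ 2)
        (nhdsWithin 0 (Set.Ioi 0))
        (nhds (-(((k : ℂ) * (1 - 2 * (η : ℂ) * (c : ℂ))
            * ((k : ℂ) * (1 - 2 * (η : ℂ) * (c : ℂ)) + 2 * (η : ℂ))) / 2)
          * (z / (1 - z) ^ 2))) := by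
  have hk1 : (1:ℝ) ≤ (k:ℝ) := by exact_mod_cast hk
  set r : ℝ := ‖z‖ with hrdef
  have hr0 : 0 ≤ r := norm_nonneg z
  set r₁ : ℝ := max r (1/2) with hr₁def
  have hr₁0 : (0:ℝ) < r₁ := lt_max_of_lt_right (by norm_num)
  have hr₁1 : r₁ < 1 := max_lt hz (by norm_num)
  have hrr₁ : r ≤ r₁ := le_max_left _ _
  set ρ : ℝ := (1 + r₁)/2 with hρdef
  have hρ0 : (0:ℝ) < ρ := by rw [hρdef]; linarith
  have hρ1 : ρ < 1 := by rw [hρdef]; linarith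
  have hr₁ρ : r₁ < ρ := by rw [hρdef]; linarith
  set C : ℝ := 2 + 4* |c| * |η| with hCdef
  have hC : (0:ℝ) < C := by
    have h1 := abs_nonneg c; have h2 := abs_nonneg η
    rw [hCdef]; nlinarith
  set C' : ℝ := (k:ℝ)*C + 4* |η| with hC'def
  have hC' : (0:ℝ) < C' := by
    have h2 := abs_nonneg η
    rw [hC'def]; nlinarith
  set M : ℝ := (k:ℝ)*C + C' with hMdef
  have hM : (0:ℝ) < M := by rw [hMdef]; nlinarith
  have hlogpos : 0 < Real.log (ρ/r₁) := Real.log_pos (by rw [lt_div_iff₀ hr₁0]; linarith)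
  have hη1 : (0:ℝ) < 2*(|η|+1) := by have := abs_nonneg η; linarith
  set ε₀ : ℝ := min (min 1 (1/(2*(|η|+1)))) (Real.log (ρ/r₁) / M) with hε₀def
  have hε₀ : 0 < ε₀ := lt_min (lt_min one_pos (by positivity)) (div_pos hlogpos hM)
  -- basic bounds on q = 1 + ηε
  have hqb : ∀ ε : ℝ, 0 < ε → ε < ε₀ → 1/2 ≤ 1 + η*ε ∧ 1 + η*ε ≤ 3/2 := by
    intro ε h0 h1
    have hεle : ε ≤ 1/(2*(|η|+1)) :=
      le_of_lt (lt_of_lt_of_le h1 ((min_le_left _ _).trans (min_le_right _ _)))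
    have hae : |η * ε| ≤ 1/2 := by
      rw [abs_mul, abs_of_pos h0]
      calc |η| * ε ≤ |η| * (1/(2*(|η|+1))) :=
            mul_le_mul_of_nonneg_left hεle (abs_nonneg η)
        _ ≤ 1/2 := by
            rw [mul_one_div, div_le_div_iff₀ hη1 (by norm_num)]
            have := abs_nonneg η; linarith
    have h2 := abs_le.mp hae
    constructor <;> linarith [h2.1, h2.2]
  have hq0 : ∀ ε : ℝ, 0 < ε → ε < ε₀ → 0 < 1 + η*ε := by
    intro ε h0 h1; have := (hqb ε h0 h1).1; linarith
  have hPpos : ∀ ε : ℝ, 0 < ε → ε < ε₀ → 0 < (1+ε)*(1+η*ε) ^ (-(2*c)) := by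
    intro ε h0 h1
    exact mul_pos (by linarith) (Real.rpow_pos_of_pos (hq0 ε h0 h1) _)
  have hlq : ∀ ε : ℝ, 0 < ε → ε < ε₀ → |Real.log (1+η*ε)| ≤ 2*(|η| *ε) := by
    intro ε h0 h1
    have := aux_abs_log_le (y := 1+η*ε) (hqb ε h0 h1).1
    have he : |1 + η*ε - 1| = |η| *ε := by
      rw [add_sub_cancel_left, abs_mul, abs_of_pos h0]
    rw [he] at this; exact this
  have hlogP : ∀ ε : ℝ, 0 < ε → ε < ε₀ →
      |Real.log ((1+ε)*(1+η*ε) ^ (-(2*c)))| ≤ C*ε := by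
    intro ε h0 h1
    have hq := hq0 ε h0 h1
    have hl1 : |Real.log (1+ε)| ≤ 2*ε := by
      have h2 := aux_abs_log_le (y := 1+ε) (by linarith)
      have he : |1 + ε - 1| = ε := by
        rw [add_sub_cancel_left, abs_of_pos h0]
      rw [he] at h2; exact h2
    have hl2 := hlq ε h0 h1
    rw [Real.log_mul (by linarith : (1:ℝ)+ε ≠ 0) (Real.rpow_pos_of_pos hq _).ne',
      Real.log_rpow hq]
    calc |Real.log (1+ε) + (-(2*c)) * Real.log (1+η*ε)|
        ≤ |Real.log (1+ε)| + |(-(2*c)) * Real.log (1+η*ε)| := abs_add_le _ _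
      _ ≤ 2*ε + (2* |c|) * (2*(|η| *ε)) := by
          rw [abs_mul]
          have h3 : |(-(2*c))| = 2* |c| := by rw [abs_neg, abs_mul, abs_two]
          rw [h3]
          exact add_le_add hl1 (mul_le_mul_of_nonneg_left hl2 (by positivity))
      _ = C*ε := by rw [hCdef]; ring
  have hlogQ : ∀ ε : ℝ, 0 < ε → ε < ε₀ →
      |Real.log (((1+ε)*(1+η*ε) ^ (-(2*c)))^k * (1+η*ε)^2)| ≤ C'*ε := by
    intro ε h0 h1
    have hq := hq0 ε h0 h1
    have hP := hPpos ε h0 h1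
    have hl2 := hlq ε h0 h1
    have hlP := hlogP ε h0 h1
    rw [Real.log_mul (pow_pos hP k).ne' (pow_pos hq 2).ne', Real.log_pow, Real.log_pow]
    calc |(k:ℝ) * Real.log ((1+ε)*(1+η*ε) ^ (-(2*c))) + (2:ℕ) * Real.log (1+η*ε)|
        ≤ |(k:ℝ) * Real.log ((1+ε)*(1+η*ε) ^ (-(2*c)))| + |(2:ℕ) * Real.log (1+η*ε)| :=
          abs_add_le _ _
      _ ≤ (k:ℝ) * (C*ε) + 2 * (2*(|η| *ε)) := by
          rw [abs_mul, abs_mul]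
          refine add_le_add ?_ ?_
          · rw [abs_of_nonneg (by positivity : (0:ℝ) ≤ ((k:ℕ):ℝ))]
            exact mul_le_mul_of_nonneg_left hlP (by positivity)
          · rw [show |((2:ℕ):ℝ)| = 2 by norm_num]
            exact mul_le_mul_of_nonneg_left hl2 (by norm_num)
      _ = C'*ε := by rw [hC'def]; ring
  have hexpfact : ∀ ε : ℝ, 0 < ε → ε < ε₀ → Real.exp (M*ε) * r₁ ≤ ρ := by
    intro ε h0 h1
    have h2 : ε ≤ Real.log (ρ/r₁) / M := le_of_lt (lt_of_lt_of_le h1 (min_le_right _ _))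
    have h3 : M*ε ≤ Real.log (ρ/r₁) := by
      rw [mul_comm]; exact (le_div_iff₀ hM).mp h2
    have h4 : Real.exp (M*ε) ≤ ρ/r₁ := by
      calc Real.exp (M*ε) ≤ Real.exp (Real.log (ρ/r₁)) := Real.exp_le_exp.mpr h3
        _ = ρ/r₁ := Real.exp_log (div_pos hρ0 hr₁0)
    calc Real.exp (M*ε) * r₁ ≤ (ρ/r₁) * r₁ := by gcongr
      _ = ρ := div_mul_cancel₀ _ hr₁0.ne'
  -- the uniform norm bound
  have hnorm : ∀ ε : ℝ, 0 < ε → ε < ε₀ → ∀ l : ℕ,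
      ‖Eterm k ((1+ε)*(1+η*ε) ^ (-(2*c))) (1+η*ε) z (l+1)‖ ≤
        ((k:ℝ)*C*C' * (((l:ℝ)+1) * ρ^(l+1))) * ε^2 := by
    intro ε h0 h1 l
    have hq := hq0 ε h0 h1
    have hPp := hPpos ε h0 h1
    have hC1 := hlogP ε h0 h1
    have hC2 := hlogQ ε h0 h1
    have hexp := hexpfact ε h0 h1
    set P : ℝ := (1+ε)*(1+η*ε) ^ (-(2*c)) with hPdef
    set q : ℝ := 1+η*ε with hqdef
    have hcast : Eterm k P q z (l+1) =
        ((1 - P ^ (-((k:ℤ)*(l+1))) : ℝ) : ℂ) * ((1 - (P^k*q^2)^(l+1) : ℝ) : ℂ)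
          / ((1 + q^(2*(l+1)) : ℝ) : ℂ) * z^(l+1) / (((l:ℕ)+1 : ℕ) : ℂ) := by
      rw [Eterm]; push_cast; ring
    have hA : |1 - P ^ (-((k:ℤ)*(l+1)))| ≤
        (((k:ℝ)*((l:ℝ)+1))*(C*ε)) * Real.exp (((k:ℝ)*((l:ℝ)+1))*(C*ε)) := by
      have h2 := aux_abs_one_sub_zpow hPp (-((k:ℤ)*(l+1))) hC1
      have habs : |((-((k:ℤ)*(l+1)) : ℤ) : ℝ)| = (k:ℝ)*((l:ℝ)+1) := by
        push_cast
        rw [abs_neg, abs_of_nonneg (by positivity)]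
      rwa [habs] at h2
    have hB : |1 - (P^k*q^2)^(l+1)| ≤
        ((((l:ℝ)+1))*(C'*ε)) * Real.exp ((((l:ℝ)+1))*(C'*ε)) := by
      have h2 := aux_abs_one_sub_pow (by positivity : (0:ℝ) < P^k*q^2) (l+1) hC2
      push_cast at h2
      exact h2
    have hD1 : (1:ℝ) ≤ 1 + q^(2*(l+1)) := le_add_of_nonneg_right (by positivity)
    have hX : (0:ℝ) < (l:ℝ)+1 := by positivity
    have hnm : ‖Eterm k P q z (l+1)‖ =
        |1 - P ^ (-((k:ℤ)*(l+1)))| * |1 - (P^k*q^2)^(l+1)| / |1 + q^(2*(l+1))|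
          * r^(l+1) / ((l:ℝ)+1) := by
      rw [hcast]
      simp only [norm_div, norm_mul, norm_pow, Complex.norm_real, Real.norm_eq_abs,
        Complex.norm_natCast]
      push_cast
      ring
    rw [hnm, abs_of_nonneg (by positivity : (0:ℝ) ≤ 1 + q^(2*(l+1)))]
    have hee : Real.exp (((k:ℝ)*((l:ℝ)+1))*(C*ε)) * Real.exp ((((l:ℝ)+1))*(C'*ε))
        = Real.exp (M*ε) ^ (l+1) := by
      rw [← Real.exp_add, ← Real.exp_nat_mul]
      congr 1
      push_cast [hMdef]
      ring
    calc |1 - P ^ (-((k:ℤ)*(l+1)))| * |1 - (P^k*q^2)^(l+1)| / (1 + q^(2*(l+1)))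
          * r^(l+1) / ((l:ℝ)+1)
        ≤ ((((k:ℝ)*((l:ℝ)+1))*(C*ε)) * Real.exp (((k:ℝ)*((l:ℝ)+1))*(C*ε)))
            * (((((l:ℝ)+1))*(C'*ε)) * Real.exp ((((l:ℝ)+1))*(C'*ε))) / 1
            * r₁^(l+1) / ((l:ℝ)+1) := by
          gcongr
        _ = ((k:ℝ)*C*C' * (((l:ℝ)+1) * (Real.exp (M*ε) * r₁)^(l+1))) * ε^2 := by
          rw [mul_pow, ← hee]
          field_simp
        _ ≤ ((k:ℝ)*C*C' * (((l:ℝ)+1) * ρ^(l+1))) * ε^2 := by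
          gcongr
  have hsumρ : Summable (fun l : ℕ => ((l:ℝ)+1) * ρ^(l+1)) := by
    have h := summable_pow_mul_geometric_of_norm_lt_one (R := ℝ) 1
      (by rw [Real.norm_eq_abs, abs_of_pos hρ0]; exact hρ1)
    have h2 := (summable_nat_add_iff 1).mpr h
    refine h2.congr fun l => ?_
    push_cast
    ring
  refine ⟨ε₀, hε₀, ?_, ?_⟩
  · intro ε h0 h1
    exact Summable.of_nonneg_of_le (fun l => norm_nonneg _) (fun l => hnorm ε h0 h1 l)
      ((hsumρ.mul_left ((k:ℝ)*C*C')).mul_right (ε^2))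
  -- the limit
  have hzn : ‖z‖ < 1 := by exact hz
  have hgeo : Summable (fun n : ℕ => (n:ℂ) * z^n) := by
    have h := summable_pow_mul_geometric_of_norm_lt_one (R := ℂ) 1 hzn
    simpa using h
  have hztsum : ∑' l : ℕ, (((l:ℂ)+1) * z^(l+1)) = z/(1-z)^2 := by
    have h3 := hgeo.tsum_eq_zero_add
    rw [tsum_coe_mul_geometric_of_norm_lt_one hzn] at h3
    simp only [Nat.cast_zero, zero_mul, pow_zero, zero_add] at h3
    calc ∑' l : ℕ, (((l:ℂ)+1) * z^(l+1)) = ∑' l : ℕ, (((l+1:ℕ):ℂ)) * z^(l+1) :=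
          tsum_congr fun b => by push_cast; ring
      _ = z/(1-z)^2 := h3.symm
  have hbound_ev : ∀ᶠ ε : ℝ in nhdsWithin 0 (Set.Ioi 0), ∀ l : ℕ,
      ‖Eterm k ((1+ε)*(1+η*ε) ^ (-(2*c))) (1+η*ε) z (l+1) / (ε:ℂ)^2‖ ≤
        (k:ℝ)*C*C' * (((l:ℝ)+1) * ρ^(l+1)) := by
    filter_upwards [Ioo_mem_nhdsGT_of_mem (Set.left_mem_Ico.mpr hε₀)] with ε hε l
    obtain ⟨h0, h1⟩ := hε
    have he2 : ‖((ε:ℂ))^2‖ = ε^2 := by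
      rw [norm_pow, Complex.norm_real, Real.norm_eq_abs, abs_of_pos h0]
    rw [norm_div, he2, div_le_iff₀ (by positivity)]
    exact hnorm ε h0 h1 l
  have hDC := tendsto_tsum_of_dominated_convergence
    (f := fun (ε : ℝ) (l : ℕ) =>
      Eterm k ((1+ε)*(1+η*ε) ^ (-(2*c))) (1+η*ε) z (l+1) / (ε:ℂ)^2)
    (g := fun l : ℕ =>
      -(((k:ℂ) * (1 - 2*(η:ℂ)*(c:ℂ)) * ((k:ℂ)*(1 - 2*(η:ℂ)*(c:ℂ)) + 2*(η:ℂ)))/2)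
        * (((l:ℂ)+1) * z^(l+1)))
    (bound := fun l : ℕ => (k:ℝ)*C*C' * (((l:ℝ)+1) * ρ^(l+1)))
    (hsumρ.mul_left ((k:ℝ)*C*C'))
    (fun l => aux_perterm k η c z ε₀ hε₀ hq0 l)
    hbound_ev
  rw [tsum_mul_left, hztsum] at hDC
  have hT : Tendsto (fun ε : ℝ =>
      (∑' l : ℕ, Eterm k ((1+ε)*(1+η*ε) ^ (-(2*c))) (1+η*ε) z (l+1)) / (ε:ℂ)^2)
      (nhdsWithin 0 (Set.Ioi 0))
      (nhds (-(((k:ℂ) * (1 - 2*(η:ℂ)*(c:ℂ)) * ((k:ℂ)*(1 - 2*(η:ℂ)*(c:ℂ)) + 2*(η:ℂ)))/2)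
        * (z/(1-z)^2))) := by
    refine hDC.congr fun ε => ?_
    exact tsum_div_const
  have hsq : Tendsto (fun ε : ℝ => ((ε:ℂ))^2) (nhdsWithin 0 (Set.Ioi 0)) (nhds 0) := by
    have hcont : Continuous fun ε : ℝ => ((ε:ℂ))^2 := Complex.continuous_ofReal.pow 2
    have h2 := (hcont.tendsto 0).mono_left (nhdsWithin_le_nhds (s := Set.Ioi 0))
    simpa using h2
  have hS0 : Tendsto (fun ε : ℝ =>
      ∑' l : ℕ, Eterm k ((1+ε)*(1+η*ε) ^ (-(2*c))) (1+η*ε) z (l+1))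
      (nhdsWithin 0 (Set.Ioi 0)) (nhds 0) := by
    have h4 := hsq.mul hT
    rw [zero_mul] at h4
    refine h4.congr' ?_
    filter_upwards [self_mem_nhdsWithin] with ε hε
    have hε0 : ((ε:ℂ))^2 ≠ 0 :=
      pow_ne_zero _ (Complex.ofReal_ne_zero.mpr (ne_of_gt hε))
    field_simp
    exact mul_div_cancel_left₀ _ (Complex.ofReal_ne_zero.mpr (ne_of_gt hε))
  have hrem : Tendsto (fun ε : ℝ =>
      (Complex.exp (∑' l : ℕ, Eterm k ((1+ε)*(1+η*ε) ^ (-(2*c))) (1+η*ε) z (l+1)) - 1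
        - ∑' l : ℕ, Eterm k ((1+ε)*(1+η*ε) ^ (-(2*c))) (1+η*ε) z (l+1)) / (ε:ℂ)^2)
      (nhdsWithin 0 (Set.Ioi 0)) (nhds 0) := by
    refine squeeze_zero_norm' ?_ ?_
      (a := fun ε : ℝ => ε^2 *
        ‖(∑' l : ℕ, Eterm k ((1+ε)*(1+η*ε) ^ (-(2*c))) (1+η*ε) z (l+1)) / (ε:ℂ)^2‖^2)
    · filter_upwards [self_mem_nhdsWithin,
        hS0.eventually (Metric.ball_mem_nhds (0:ℂ) one_pos)] with ε hε hball
      have h0 : (0:ℝ) < ε := hε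
      have hS1 : ‖∑' l : ℕ, Eterm k ((1+ε)*(1+η*ε) ^ (-(2*c))) (1+η*ε) z (l+1)‖ ≤ 1 := by
        have := mem_ball_zero_iff.mp hball
        exact this.le
      have he2 : ‖((ε:ℂ))^2‖ = ε^2 := by
        rw [norm_pow, Complex.norm_real, Real.norm_eq_abs, abs_of_pos h0]
      rw [norm_div, norm_div, he2]
      rw [div_pow, ← mul_div_assoc]
      rw [div_le_div_iff₀ (by positivity) (by positivity)]
      have hq2 := aux_exp_quad hS1
      calc ‖Complex.exp (∑' l : ℕ, Eterm k ((1+ε)*(1+η*ε) ^ (-(2*c))) (1+η*ε) z (l+1)) - 1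
            - ∑' l : ℕ, Eterm k ((1+ε)*(1+η*ε) ^ (-(2*c))) (1+η*ε) z (l+1)‖ * ((ε^2)^2)
          ≤ ‖∑' l : ℕ, Eterm k ((1+ε)*(1+η*ε) ^ (-(2*c))) (1+η*ε) z (l+1)‖^2 * ((ε^2)^2) := by
            gcongr
        _ = ε ^ 2 * ‖∑' l : ℕ, Eterm k ((1+ε)*(1+η*ε) ^ (-(2*c))) (1+η*ε) z (l+1)‖ ^ 2 * ε ^ 2 := by
            ring
    · have hn := hT.norm
      have h2 : Tendsto (fun ε : ℝ => ε^2) (nhdsWithin 0 (Set.Ioi 0)) (nhds 0) := by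
        have hcont : Continuous fun ε : ℝ => ε^2 := continuous_pow 2
        have h3 := (hcont.tendsto 0).mono_left (nhdsWithin_le_nhds (s := Set.Ioi 0))
        simpa using h3
      have h4 := h2.mul (hn.pow 2)
      rw [zero_mul] at h4
      exact h4
  have hfinal := hT.add hrem
  rw [add_zero] at hfinal
  refine Filter.Tendsto.congr' ?_ hfinal
  filter_upwards [self_mem_nhdsWithin] with ε hε
  have h0 : (0:ℝ) < ε := hε
  have hε0 : ((ε:ℂ))^2 ≠ 0 :=
    pow_ne_zero _ (Complex.ofReal_ne_zero.mpr (ne_of_gt h0))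
  rw [Efun, ← add_div]
  congr 1
  ring
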